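/- Every non-doubling Radon measure on ℝ^d is singular with respect to the Lebesgue measure L^d. -/

import Mathlib

open MeasureTheory Filter Topology Metric Set

noncomputable section

abbrev Ed (d : ℕ) := EuclideanSpace ℝ (Fin d)

/-- every non-doubling Radon measure on ℝ^d (one for which the doubling
condition `limsup_{r→0} μ(B(x,2r))/μ(B(x,r)) < ∞` fails at `μ`-a.e. `x`) is singular
with respect to Lebesgue measure. -/
theorem stmt_5 (d : ℕ) (hd : 0 < d) (μ : Measure (Ed d)) (hRadon : IsLocallyFiniteMeasure μ)
    (hnd : ∀ᵐ x ∂μ,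
      ¬ limsup (fun r : ℝ => μ (closedBall x (2 * r)) / μ (closedBall x r))
          (𝓝[>] (0:ℝ)) < ⊤) :
    Measure.MutuallySingular μ (volume : Measure (Ed d)) := by
  set f := μ.rnDeriv (volume : Measure (Ed d)) with hf
  set t := (volume : Measure (Ed d)).withDensity f with ht
  -- key claim: the Besicovitch differentiation theorem shows the doubling ratio is finite
  -- at volume-a.e. point where f ≠ 0
  have claim : ∀ᵐ x ∂(volume : Measure (Ed d)), f x ≠ 0 →
      limsup (fun r : ℝ => μ (closedBall x (2 * r)) / μ (closedBall x r))
        (𝓝[>] (0:ℝ)) < ⊤ := by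
    filter_upwards [Besicovitch.ae_tendsto_rnDeriv μ (volume : Measure (Ed d)),
      μ.rnDeriv_lt_top (volume : Measure (Ed d))] with x hx hft hf0
    set L := f x with hL
    have hftop : L ≠ ⊤ := hft.ne
    have h2 : Tendsto (fun r : ℝ => 2 * r) (𝓝[>] (0:ℝ)) (𝓝[>] (0:ℝ)) := by
      apply tendsto_nhdsWithin_of_tendsto_nhds_of_eventually_within
      · have : Tendsto (fun r : ℝ => 2 * r) (𝓝 (0:ℝ)) (𝓝 (2 * 0)) :=
          (tendsto_id.const_mul 2)
        simpa using this.mono_left nhdsWithin_le_nhds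
      · filter_upwards [self_mem_nhdsWithin] with r hr
        exact mul_pos two_pos (mem_Ioi.1 hr)
    have hx2 : Tendsto (fun r : ℝ =>
        μ (closedBall x (2 * r)) / volume (closedBall x (2 * r))) (𝓝[>] (0:ℝ)) (𝓝 L) :=
      hx.comp h2
    have hL2 : L < 2 * L := by
      rw [two_mul]; exact ENNReal.lt_add_right hftop hf0
    have hLhalf : L / 2 < L := ENNReal.half_lt_self hf0 hftop
    have hA : ∀ᶠ r in 𝓝[>] (0:ℝ),
        μ (closedBall x (2 * r)) / volume (closedBall x (2 * r)) < 2 * L :=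
      hx2.eventually_lt_const hL2
    have hB : ∀ᶠ r in 𝓝[>] (0:ℝ),
        L / 2 < μ (closedBall x r) / volume (closedBall x r) :=
      hx.eventually_const_lt hLhalf
    have key : ∀ᶠ r in 𝓝[>] (0:ℝ),
        μ (closedBall x (2 * r)) / μ (closedBall x r) ≤ ENNReal.ofReal (8 * 2 ^ d) := by
      filter_upwards [hA, hB, self_mem_nhdsWithin] with r hAr hBr hr
      rw [mem_Ioi] at hr
      have hv0 : volume (closedBall x r) ≠ 0 := (measure_closedBall_pos volume x hr).ne'
      have hvt : volume (closedBall x r) ≠ ⊤ := measure_closedBall_lt_top.ne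
      have hv20 : volume (closedBall x (2 * r)) ≠ 0 :=
        (measure_closedBall_pos volume x (by linarith)).ne'
      have hv2t : volume (closedBall x (2 * r)) ≠ ⊤ := measure_closedBall_lt_top.ne
      -- scaling of Lebesgue measure
      have hscale : volume (closedBall x (2 * r)) =
          ENNReal.ofReal (2 ^ d) * volume (closedBall x r) := by
        rw [Measure.addHaar_closedBall_mul_of_pos volume x two_pos r,
          ← Measure.addHaar_closedBall_center volume x r]
        congr 2
        simp [finrank_euclideanSpace]
      -- upper bound on numerator
      have ha : μ (closedBall x (2 * r)) <
          2 * L * volume (closedBall x (2 * r)) :=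
        (ENNReal.div_lt_iff (Or.inl hv20) (Or.inl hv2t)).1 hAr
      have hat : μ (closedBall x (2 * r)) ≠ ⊤ :=
        (ha.trans_le le_top).ne
      -- lower bound on denominator
      have hb : L / 2 * volume (closedBall x r) < μ (closedBall x r) :=
        ENNReal.mul_lt_of_lt_div hBr
      have hb0 : μ (closedBall x r) ≠ 0 := by
        refine fun h => ?_
        rw [h] at hb
        exact (not_lt_of_ge (zero_le (a := L / 2 * volume (closedBall x r)))) hb
      have hbt : μ (closedBall x r) ≠ ⊤ := by
        refine fun h => ?_
        have hsub : closedBall x r ⊆ closedBall x (2 * r) :=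
          closedBall_subset_closedBall (by linarith)
        have := measure_mono (μ := μ) hsub
        rw [h] at this
        exact hat (top_le_iff.1 this)
      -- pass to real numbers
      rw [ENNReal.div_le_iff hb0 hbt]
      have hrhs : ENNReal.ofReal (8 * 2 ^ d) * μ (closedBall x r) ≠ ⊤ :=
        ENNReal.mul_ne_top ENNReal.ofReal_ne_top hbt
      rw [← ENNReal.toReal_le_toReal hat hrhs]
      have hLt : L ≠ ⊤ := hftop
      set l := L.toReal with hl
      have hlpos : 0 < l := ENNReal.toReal_pos hf0 hftop
      set w := (volume (closedBall x r)).toReal with hw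
      have hwpos : 0 < w := ENNReal.toReal_pos hv0 hvt
      have ha' : (μ (closedBall x (2 * r))).toReal ≤ 2 * l * (2 ^ d * w) := by
        have := ENNReal.toReal_mono (ENNReal.mul_ne_top
          (ENNReal.mul_ne_top (by simp) hLt) hv2t) ha.le
        rw [hscale] at this
        calc (μ (closedBall x (2 * r))).toReal
            ≤ (2 * L * (ENNReal.ofReal (2 ^ d) * volume (closedBall x r))).toReal := this
          _ = 2 * l * (2 ^ d * w) := by
              rw [ENNReal.toReal_mul, ENNReal.toReal_mul, ENNReal.toReal_mul,
                ENNReal.toReal_ofReal (by positivity)]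
              simp [hl, hw]
      have hb' : l / 2 * w ≤ (μ (closedBall x r)).toReal := by
        have := ENNReal.toReal_mono hbt hb.le
        calc l / 2 * w = (L / 2 * volume (closedBall x r)).toReal := by
              rw [ENNReal.toReal_mul, ENNReal.toReal_div]
              simp [hl, hw]
          _ ≤ _ := this
      rw [ENNReal.toReal_mul, ENNReal.toReal_ofReal (by positivity)]
      calc (μ (closedBall x (2 * r))).toReal ≤ 2 * l * (2 ^ d * w) := ha'
        _ ≤ 8 * 2 ^ d * (l / 2 * w) := by
            have h2d : (0:ℝ) < 2 ^ d := by positivity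
            nlinarith [mul_pos (mul_pos hlpos h2d) hwpos]
        _ ≤ 8 * 2 ^ d * (μ (closedBall x r)).toReal := by
            have h8 : (0:ℝ) < 8 * 2 ^ d := by positivity
            nlinarith [hb']
    calc limsup (fun r : ℝ => μ (closedBall x (2 * r)) / μ (closedBall x r))
          (𝓝[>] (0:ℝ)) ≤ ENNReal.ofReal (8 * 2 ^ d) := limsup_le_of_le (by isBoundedDefault) key
      _ < ⊤ := ENNReal.ofReal_lt_top
  -- now show the absolutely continuous part vanishes
  have htzero : t = 0 := by
    have h1 : ∀ᵐ x ∂t, ¬ limsup (fun r : ℝ => μ (closedBall x (2 * r)) / μ (closedBall x r))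
        (𝓝[>] (0:ℝ)) < ⊤ := by
      have hle : t ≤ μ := μ.withDensity_rnDeriv_le (volume : Measure (Ed d))
      exact hnd.filter_mono (ae_mono hle)
    have h2 : ∀ᵐ x ∂t, f x ≠ 0 →
        limsup (fun r : ℝ => μ (closedBall x (2 * r)) / μ (closedBall x r))
          (𝓝[>] (0:ℝ)) < ⊤ :=
      (withDensity_absolutelyContinuous (volume : Measure (Ed d)) f).ae_le claim
    have h3 : ∀ᵐ x ∂t, f x ≠ 0 := by
      rw [ae_iff]
      have hm : MeasurableSet {x : Ed d | f x = 0} :=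
        (μ.measurable_rnDeriv (volume : Measure (Ed d))) (measurableSet_singleton 0)
      rw [ht]
      rw [withDensity_apply _ (by simpa using hm)]
      rw [show {a : Ed d | ¬ f a ≠ 0} = {x : Ed d | f x = 0} by ext x; simp]
      calc ∫⁻ x in {x : Ed d | f x = 0}, f x ∂(volume : Measure (Ed d))
          = ∫⁻ x in {x : Ed d | f x = 0}, 0 ∂(volume : Measure (Ed d)) :=
            setLIntegral_congr_fun hm (fun a ha => ha)
        _ = 0 := by simp
    have : ∀ᵐ x ∂t, False := by
      filter_upwards [h1, h2, h3] with x hx1 hx2 hx3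
      exact hx1 (hx2 hx3)
    have : t univ = 0 := by
      simpa using this
    exact Measure.measure_univ_eq_zero.1 this
  have hdecomp : μ = μ.singularPart (volume : Measure (Ed d)) + t :=
    (μ.haveLebesgueDecomposition_add (volume : Measure (Ed d)))
  rw [hdecomp, htzero, add_zero]
  exact μ.mutuallySingular_singularPart (volume : Measure (Ed d))

end
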